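/- Let R be a commutative ring, let k ≥ 2, and let h_1, …, h_k, τ ∈ R satisfy h_i² + τ·h_i = 0 for every i = 1, …, k. Then ∏_{i=1}^{k-1} (h_i + h_{i+1} + τ) = ∑_{j=0}^{k-1} τ^{k-1-j} · e_j(h_1, …, h_k), where e_j denotes the j-th elementary symmetric polynomial in k variables (with e_0 = 1). -/

import Mathlib

open Finset

private def E {R : Type*} [CommRing R] (h : ℕ → R) (n j : ℕ) : R :=
  ∑ t ∈ Finset.powersetCard j (Finset.range n), ∏ i ∈ t, h i

private lemma E_zero {R : Type*} [CommRing R] (h : ℕ → R) (n : ℕ) : E h n 0 = 1 := by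
  simp [E]

private lemma E_top {R : Type*} [CommRing R] (h : ℕ → R) (n : ℕ) :
    E h n n = ∏ i ∈ Finset.range n, h i := by
  have : Finset.powersetCard n (Finset.range n) = {Finset.range n} := by
    simpa using Finset.powersetCard_self (Finset.range n)
  simp [E, this]

private lemma E_succ {R : Type*} [CommRing R] (h : ℕ → R) (n j : ℕ) :
    E h (n+1) (j+1) = E h n (j+1) + h n * E h n j := by
  have hn : n ∉ Finset.range n := by simp
  rw [E, Finset.range_add_one, Finset.powersetCard_succ_insert hn, Finset.sum_union, Finset.sum_image]
  · rw [E, E, Finset.mul_sum]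
    congr 1
    refine Finset.sum_congr rfl fun t ht => ?_
    have hnt : n ∉ t := fun hnt => hn ((Finset.mem_powersetCard.mp ht).1 hnt)
    rw [Finset.prod_insert hnt]
  · intro t ht s hs hst
    have hnt : n ∉ t := fun hmem => hn ((Finset.mem_powersetCard.mp ht).1 hmem)
    have hns : n ∉ s := fun hmem => hn ((Finset.mem_powersetCard.mp hs).1 hmem)
    rw [← Finset.erase_insert hnt, ← Finset.erase_insert hns, hst]
  · rw [Finset.disjoint_left]
    intro t ht ht'
    obtain ⟨s, hs, rfl⟩ := Finset.mem_image.mp ht'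
    have : n ∈ Finset.range n := (Finset.mem_powersetCard.mp ht).1 (Finset.mem_insert_self n s)
    exact hn this

private lemma lemA {R : Type*} [CommRing R] (h : ℕ → R) (τ : R) :
    ∀ n, (∀ i ≤ n, h i ^ 2 + τ * h i = 0) →
      h n * ∏ i ∈ Finset.range n, (h i + h (i+1) + τ) = ∏ i ∈ Finset.range (n+1), h i := by
  intro n
  induction n with
  | zero => intro _; simp
  | succ n ih =>
    intro hrel
    have h1 : h (n+1) ^ 2 + τ * h (n+1) = 0 := hrel _ le_rfl
    have ih' := ih (fun i hi => hrel i (hi.trans (Nat.le_succ n)))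
    rw [Finset.prod_range_succ, Finset.prod_range_succ (f := h), ← ih']
    linear_combination (∏ i ∈ Finset.range n, (h i + h (i+1) + τ)) * h1

private lemma helper {R : Type*} [CommRing R] (h : ℕ → R) (τ : R) :
    ∀ n, (∀ i ≤ n, h i ^ 2 + τ * h i = 0) →
      ∏ i ∈ Finset.range n, (h i + h (i+1) + τ) =
        ∑ j ∈ Finset.range (n+1), τ ^ (n - j) * E h (n+1) j := by
  intro n
  induction n with
  | zero => intro _; simp [E]
  | succ n ih =>
    intro hrel
    have hrel' : ∀ i ≤ n, h i ^ 2 + τ * h i = 0 :=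
      fun i hi => hrel i (hi.trans (Nat.le_succ n))
    have ih' := ih hrel'
    set S := ∑ j ∈ Finset.range (n+1), τ ^ (n - j) * E h (n+1) j with hS
    have hA : h n * S = ∏ i ∈ Finset.range (n+1), h i := by
      rw [← ih']; exact lemA h τ n hrel'
    have eT : ∑ j ∈ Finset.range (n+2), τ ^ (n+1-j) * E h (n+1) j
        = τ * S + ∏ i ∈ Finset.range (n+1), h i := by
      rw [Finset.sum_range_succ, E_top]
      congr 1
      · rw [hS, Finset.mul_sum]
        refine Finset.sum_congr rfl fun j hj => ?_
        have hj' : n + 1 - j = (n - j) + 1 := by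
          have := Finset.mem_range.mp hj; omega
        rw [hj', pow_succ]; ring
      · simp
    rw [Finset.sum_range_succ'] at eT
    simp only [Nat.succ_sub_succ, Nat.sub_zero, E_zero, mul_one] at eT
    have e2 : ∀ j ∈ Finset.range (n+1), τ ^ (n - j) * E h (n+2) (j+1)
        = τ ^ (n - j) * E h (n+1) (j+1) + h (n+1) * (τ ^ (n - j) * E h (n+1) j) := by
      intro j _
      rw [show n + 2 = (n+1) + 1 from rfl, E_succ]; ring
    have key : ∑ j ∈ Finset.range (n+1+1), τ ^ (n+1-j) * E h (n+1+1) j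
        = τ * S + h (n+1) * S + ∏ i ∈ Finset.range (n+1), h i := by
      rw [Finset.sum_range_succ']
      simp only [Nat.succ_sub_succ, Nat.sub_zero, E_zero, mul_one]
      rw [Finset.sum_congr rfl e2, Finset.sum_add_distrib, ← Finset.mul_sum]
      linear_combination eT
    rw [Finset.prod_range_succ, ih', key]
    linear_combination hA

theorem stmt_2 {R : Type*} [CommRing R] (k : ℕ) (hk : 2 ≤ k) (h : ℕ → R) (τ : R)
    (hrel : ∀ i < k, h i ^ 2 + τ * h i = 0) :
    ∏ i ∈ Finset.range (k - 1), (h i + h (i + 1) + τ) =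
      ∑ j ∈ Finset.range k, τ ^ (k - 1 - j) *
        ∑ t ∈ Finset.powersetCard j (Finset.range k), ∏ i ∈ t, h i := by
  obtain ⟨n, rfl⟩ : ∃ n, k = n + 1 := ⟨k - 1, by omega⟩
  have := helper h τ n (fun i hi => hrel i (by omega))
  simpa [E] using this
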